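/- The complex number ζ = (1/4)(3 − √5 + i·√(2(1 + 3√5))) has absolute value 1 but is not a root of unity. -/

import Mathlib

open Complex

open Polynomial in
set_option maxHeartbeats 1000000 in
theorem stmt_13 (z : ℂ)
    (hz : z = (1 / 4 : ℂ) *
      (3 - Real.sqrt 5 + Complex.I * Real.sqrt (2 * (1 + 3 * Real.sqrt 5)))) :
    ‖z‖ = 1 ∧ ∀ n : ℕ, 0 < n → z ^ n ≠ 1 := by
  have c5 : Real.sqrt 5 ^ 2 = 5 := Real.sq_sqrt (by norm_num)
  have c5pos : (0:ℝ) < Real.sqrt 5 := Real.sqrt_pos.2 (by norm_num)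
  have c5lt : Real.sqrt 5 < 3 := by nlinarith
  have c5gt : 2 < Real.sqrt 5 := by nlinarith
  have c5irr : Irrational (Real.sqrt 5) := by
    exact_mod_cast Nat.Prime.irrational_sqrt (by norm_num : Nat.Prime 5)
  set c := Real.sqrt 5 with hc
  have hb2 : Real.sqrt (2*(1+3*c)) ^ 2 = 2*(1+3*c) := Real.sq_sqrt (by nlinarith)
  have hre : z.re = (3 - c)/4 := by rw [hz]; simp; ring
  have him : z.im = Real.sqrt (2*(1+3*c))/4 := by rw [hz]; simp; ring
  have hns : Complex.normSq z = 1 := by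
    rw [Complex.normSq_apply, hre, him]; nlinarith
  have habs : ‖z‖ = 1 := by
    rw [Complex.norm_def, hns, Real.sqrt_one]
  refine ⟨habs, ?_⟩
  intro n hn hzn
  have hz0 : z ≠ 0 := by
    intro h; rw [h] at habs; simp at habs
  have hinv : z⁻¹ = starRingEnd ℂ z := by
    rw [Complex.inv_def, hns]; simp
  -- w := z + z⁻¹ = (3 - √5)/2 is real
  set w : ℝ := (3 - c)/2 with hwdef
  have hw : z + z⁻¹ = (w : ℂ) := by
    rw [hinv]; apply Complex.ext
    · simp [hre, hwdef]; ring
    · simp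
  have hd : (dickson 1 (1:ℂ) n).eval (z + z⁻¹) = 2 := by
    rw [dickson_one_one_eval_add_inv z z⁻¹ (mul_inv_cancel₀ hz0), hzn, inv_pow, hzn]
    norm_num
  set P : ℚ[X] := dickson 1 1 n - C 2 with hP
  have hPwC : aeval ((w : ℝ) : ℂ) P = 0 := by
    rw [hP, map_sub, aeval_C, aeval_def, eval₂_eq_eval_map, map_dickson, map_one, ← hw, hd]
    norm_num
  have hPw : aeval w P = 0 :=
    (aeval_algebraMap_eq_zero_iff ℂ w P).mp hPwC
  -- the minimal polynomial of w is q = X² - 3X + 1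
  set q : ℚ[X] := X^2 - C 3 * X + 1 with hq
  have hqmonic : q.Monic := by rw [hq]; monicity!
  have hqdeg : q.natDegree = 2 := by rw [hq]; compute_degree!
  have hqw : aeval w q = 0 := by
    rw [hq]
    simp only [map_add, map_sub, map_pow, map_mul, aeval_X, aeval_C, map_one]
    rw [hwdef]
    simp only [map_ofNat]
    nlinarith
  have hint : IsIntegral ℚ w := ⟨q, hqmonic, by rw [← aeval_def]; exact hqw⟩
  have hmin : minpoly ℚ w = q := by
    obtain ⟨d, hd'⟩ := minpoly.dvd ℚ w (by rw [aeval_def] at hqw ⊢; exact hqw)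
    have hmmonic := minpoly.monic hint
    have hd0 : d ≠ 0 := by
      intro h; rw [h, mul_zero] at hd'; exact hqmonic.ne_zero hd'
    have hdegs : (minpoly ℚ w).natDegree + d.natDegree = 2 := by
      rw [← Polynomial.natDegree_mul (minpoly.ne_zero hint) hd0, ← hd', hqdeg]
    have hnot1 : (minpoly ℚ w).natDegree ≠ 1 := by
      intro h1
      have : (minpoly ℚ w).degree = 1 := by
        rw [degree_eq_natDegree (minpoly.ne_zero hint), h1]; rfl
      obtain ⟨r, hr⟩ := minpoly.degree_eq_one_iff.mp this
      refine c5irr ⟨3 - 2*r, ?_⟩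
      have hrw : (r:ℝ) = w := by exact_mod_cast hr
      rw [hwdef] at hrw
      push_cast
      linarith
    have hge1 : 1 ≤ (minpoly ℚ w).natDegree := minpoly.natDegree_pos hint
    have hdeg2 : (minpoly ℚ w).natDegree = 2 := by omega
    have hddeg : d.natDegree = 0 := by omega
    have hdmonic : d.Monic := by
      have := hd' ▸ hqmonic
      unfold Polynomial.Monic at *
      rw [Polynomial.leadingCoeff_mul] at this
      rw [hmmonic] at this; simpa using this
    have : d = 1 := Polynomial.eq_one_of_monic_natDegree_zero hdmonic hddeg
    rw [this, mul_one] at hd'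
    exact hd'.symm
  have hqP : q ∣ P := hmin ▸ minpoly.dvd ℚ w hPw
  -- the conjugate root r = (3 + √5)/2 > 2
  set r : ℝ := (3 + c)/2 with hrdef
  have hr2 : 2 < r := by rw [hrdef]; linarith
  have hqr : aeval r q = 0 := by
    rw [hq]
    simp only [map_add, map_sub, map_pow, map_mul, aeval_X, aeval_C, map_one]
    rw [hrdef]; simp only [map_ofNat]; nlinarith
  have hPr : aeval r P = 0 := by
    obtain ⟨h, hh⟩ := hqP
    rw [hh, map_mul, hqr, zero_mul]
  have hdr : (dickson 1 (1:ℝ) n).eval r = 2 := by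
    have := hPr
    rw [hP, map_sub, aeval_C, aeval_def, eval₂_eq_eval_map, map_dickson, map_one] at this
    simp only [map_ofNat] at this
    linarith
  -- write r = s + s⁻¹ with s > 1
  set s : ℝ := (r + Real.sqrt (r^2 - 4))/2 with hsdef
  have hsq : Real.sqrt (r^2 - 4) ^ 2 = r^2 - 4 := Real.sq_sqrt (by nlinarith)
  have hsqnn : 0 ≤ Real.sqrt (r^2 - 4) := Real.sqrt_nonneg _
  have hs1 : 1 < s := by rw [hsdef]; linarith
  have hs0 : s ≠ 0 := by positivity
  have hst : s * (r - s) = 1 := by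
    have h1 : s * (r - s) = (r^2 - Real.sqrt (r^2-4)^2)/4 := by rw [hsdef]; ring
    rw [h1, hsq]; ring
  have hrs : r = s + (r - s) := by ring
  have hds : (dickson 1 (1:ℝ) n).eval r = s^n + (r - s)^n := by
    conv_lhs => rw [hrs]
    exact dickson_one_one_eval_add_inv s (r - s) hst n
  have hinvs : r - s = s⁻¹ := eq_inv_of_mul_eq_one_left (by rw [mul_comm]; exact hst)
  rw [hds, hinvs, inv_pow] at hdr
  have hsn : 1 < s^n := one_lt_pow₀ hs1 hn.ne'
  have hui : s^n * (s^n)⁻¹ = 1 := mul_inv_cancel₀ (by positivity)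
  have hu : s^n * (2 - s^n) = 1 := by
    rw [show (2:ℝ) - s^n = (s^n)⁻¹ by linarith]; exact hui
  nlinarith [hu, hsn]
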